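/- Let A be a finite abelian group of order n that is not an elementary abelian 2-group, let D(A) = ⟨x, A : x² = 1, xax = a⁻¹ for all a ∈ A⟩ be the generalized dihedral group, and consider the transitive degree-n action of G = D(A) on the left cosets of H = ⟨x⟩. Then the independence number of the derangement graph Γ_G equals 2 = |G|/n (so G has the EKR property), and there exist two distinct cosets u ≠ v such that exactly one derangement of G maps u to v. -/

import Mathlib

/-- The Cayley graph of a group `Γ` with (inverse-closed) connection set `C`:
`g` and `h` are adjacent iff they are distinct and `g⁻¹ * h ∈ C` (symmetrized). -/
def cayley (Γ : Type*) [Group Γ] (C : Set Γ) : SimpleGraph Γ where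
  Adj g h := g ≠ h ∧ g⁻¹ * h ∈ C ∧ h⁻¹ * g ∈ C
  symm := ⟨fun _ _ ⟨hne, h1, h2⟩ => ⟨hne.symm, h2, h1⟩⟩
  loopless := ⟨fun _ ⟨hne, _⟩ => hne rfl⟩

/-- A set of vertices of a graph is independent if its elements are pairwise non-adjacent. -/
def IsIndepSet {V : Type*} (X : SimpleGraph V) (s : Set V) : Prop :=
  s.Pairwise fun a b => ¬ X.Adj a b

/-- The independence number of a graph: the maximum size of an independent set. -/
noncomputable def indepNum {V : Type*} (X : SimpleGraph V) : ℕ :=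
  sSup {k | ∃ s : Finset V, IsIndepSet X ↑s ∧ s.card = k}

/-- The set of derangements of a permutation group `G ≤ Sym(n)`: the elements of `G`
fixing no point of `{1,…,n}`. -/
def der {n : ℕ} (G : Subgroup (Equiv.Perm (Fin n))) : Set G :=
  {σ : G | ∀ i : Fin n, (σ : Equiv.Perm (Fin n)) i ≠ i}
/-- The set of derangements of the action of `G` on the left cosets of `H`:
the elements of `G` fixing no coset. -/
def derQ (G : Type*) [Group G] (H : Subgroup G) : Set G :=
  {g : G | ∀ c : G ⧸ H, g • c ≠ c}

/-- Let `A` be a finite abelian group that is not elementary abelian of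
exponent 2, and let `G = D(A)` be the generalized dihedral group (presented abstractly:
`A ≤ G` abelian of index 2, `x ∉ A`, `x² = 1`, `xax = a⁻¹` for `a ∈ A`), acting on the
left cosets of `H = ⟨x⟩`. Then `α(Γ_G) = 2 = |G|/n` (where `n = |G ⧸ H| = |A|` is the
degree, i.e. `|G| = 2n`), so `G` has the EKR property, and there are two distinct cosets
`u ≠ v` such that exactly one derangement of `G` maps `u` to `v`. -/
theorem stmt_8 {G : Type*} [Group G] [Fintype G]
    (A : Subgroup G) (hcomm : ∀ a ∈ A, ∀ b ∈ A, a * b = b * a)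
    (hA2 : ∃ a ∈ A, a ^ 2 ≠ 1)
    (x : G) (hx2 : x ^ 2 = 1) (hxA : x ∉ A) (hindex : A.index = 2)
    (hconj : ∀ a ∈ A, x * a * x = a⁻¹) :
    indepNum (cayley G (derQ G (Subgroup.zpowers x))) = 2 ∧
    Nat.card G = 2 * Nat.card (G ⧸ Subgroup.zpowers x) ∧
    ∃ u v : G ⧸ Subgroup.zpowers x, u ≠ v ∧
      ∃! g : G, g ∈ derQ G (Subgroup.zpowers x) ∧ g • u = v := by
  classical
  set H := Subgroup.zpowers x with hHdef
  have hx1 : x ≠ 1 := fun h => hxA (h ▸ A.one_mem)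
  have hxm : x * x = 1 := by rw [← pow_two]; exact hx2
  have hxinv : x⁻¹ = x := inv_eq_of_mul_eq_one_right hxm
  have hmemH : ∀ h : G, h ∈ H ↔ h = 1 ∨ h = x := by
    intro h
    constructor
    · rintro ⟨k, rfl⟩
      rcases Int.even_or_odd k with ⟨m, rfl⟩ | ⟨m, rfl⟩
      · left
        show x ^ (m + m) = 1
        rw [← two_mul, zpow_mul, zpow_two, hxm, one_zpow]
      · right
        show x ^ (2 * m + 1) = x
        rw [zpow_add, zpow_mul, zpow_two, hxm, one_zpow, zpow_one, one_mul]
    · intro h'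
      rcases h' with rfl | rfl
      · exact H.one_mem
      · exact Subgroup.mem_zpowers _
  have hxH : x ∈ H := Subgroup.mem_zpowers x
  have hxa : ∀ a ∈ A, x * a = a⁻¹ * x := by
    intro a ha
    rw [← hconj a ha, mul_assoc, mul_assoc, hxm, mul_one]
  have hcon : ∀ a ∈ A, a * x * a⁻¹ = a ^ 2 * x := by
    intro a ha
    have h5 : x * a⁻¹ = a * x := by rw [hxa a⁻¹ (A.inv_mem ha), inv_inv]
    rw [mul_assoc, h5, ← mul_assoc, ← pow_two]
  have hsmul : ∀ g c : G, g • ((c : G ⧸ H)) = ((g * c : G) : G ⧸ H) := fun _ _ => rfl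
  have hder : ∀ g : G, g ∈ derQ G H ↔ ∀ c : G, c⁻¹ * g⁻¹ * c ∉ H := by
    intro g
    constructor
    · intro hg c hc
      apply hg ((c : G ⧸ H))
      rw [hsmul, QuotientGroup.eq, mul_inv_rev]
      exact hc
    · intro hc q hq
      induction q using QuotientGroup.induction_on with
      | H c =>
        rw [hsmul, QuotientGroup.eq, mul_inv_rev] at hq
        exact hc c hq
  have hconjA : ∀ c : G, ∀ a ∈ A, c * a * c⁻¹ ∈ A := by
    intro c a ha
    rw [mul_assoc, Subgroup.mul_mem_iff_of_index_two hindex,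
      Subgroup.mul_mem_iff_of_index_two hindex, A.inv_mem_iff]
    tauto
  have hAder : ∀ a ∈ A, a ≠ 1 → a ∈ derQ G H := by
    intro a ha h1
    rw [hder]
    intro c hc
    have hmem : c⁻¹ * a⁻¹ * c ∈ A := by
      have := hconjA c⁻¹ a⁻¹ (A.inv_mem ha)
      simpa using this
    rcases (hmemH _).1 hc with h | h
    · apply h1
      have h2 : a⁻¹ = 1 := by
        have := congrArg (fun y => c * y * c⁻¹) h
        simpa [mul_assoc] using this
      simpa using congrArg (·⁻¹) h2
    · exact hxA (h ▸ hmem)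
  have hsqx : ∀ a ∈ A, a ^ 2 * x ∉ derQ G H := by
    intro a ha hmem
    apply hmem ((a : G ⧸ H))
    rw [hsmul, QuotientGroup.eq]
    have h6 : a ^ 2 * x * a = a * x := by
      rw [mul_assoc, hxa a ha, pow_two, mul_assoc]
      simp
    rw [h6]
    have h7 : (a * x)⁻¹ * a = x⁻¹ := by group
    rw [h7, hxinv]
    exact hxH
  have hxder : x ∉ derQ G H := by
    have := hsqx 1 A.one_mem
    simpa using this
  have hclass : ∀ g : G, g ∉ derQ G H → g = 1 ∨ ∃ a ∈ A, g = a ^ 2 * x := by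
    intro g hg
    rw [hder] at hg
    push_neg at hg
    obtain ⟨c, hc⟩ := hg
    rcases (hmemH _).1 hc with h | h
    · left
      have h2 : g⁻¹ = 1 := by
        have := congrArg (fun y => c * y * c⁻¹) h
        simpa [mul_assoc] using this
      simpa using congrArg (·⁻¹) h2
    · right
      have hg' : g = c * x * c⁻¹ := by
        have h1 : g⁻¹ = c * x * c⁻¹ := by
          have := congrArg (fun y => c * y * c⁻¹) h
          simpa [mul_assoc] using this
        have h2 := congrArg (·⁻¹) h1
        simp only [mul_inv_rev, hxinv, inv_inv] at h2
        rw [h2, mul_assoc]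
      by_cases hcA : c ∈ A
      · exact ⟨c, hcA, hg'.trans (hcon c hcA)⟩
      · have hcxA : c * x ∈ A := by
          rw [Subgroup.mul_mem_iff_of_index_two hindex]
          tauto
        refine ⟨c * x, hcxA, ?_⟩
        rw [hg', ← hcon (c * x) hcxA]
        group
  -- inverse closedness
  have hinv : ∀ g : G, g ∈ derQ G H → g⁻¹ ∈ derQ G H := by
    intro g hg q hq
    apply hg q
    have h9 := congrArg (fun r => g • r) hq
    exact ((by simpa [smul_smul] using h9 : q = g • q)).symm
  -- upper bound
  have hbound : ∀ s : Finset G, IsIndepSet (cayley G (derQ G H)) ↑s → s.card ≤ 2 := by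
    intro s hs
    by_contra hlt
    push_neg at hlt
    obtain ⟨g, h, k, hg, hh, hk, hgh, hgk, hhk⟩ := Finset.two_lt_card_iff.mp hlt
    have key : ∀ u v : G, u ∈ s → v ∈ s → u ≠ v → u⁻¹ * v ∉ derQ G H := by
      intro u v hu hv huv hmem
      exact hs hu hv huv ⟨huv, hmem, by
        have : v⁻¹ * u = (u⁻¹ * v)⁻¹ := by group
        rw [this]; exact hinv _ hmem⟩
    have h1 := key g h hg hh hgh
    have h2 := key g k hg hk hgk
    have h3 := key h k hh hk hhk
    obtain ⟨a, ha, hga⟩ := (hclass _ h1).resolve_left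
      (fun e => hgh (by rwa [inv_mul_eq_one] at e))
    obtain ⟨b, hb, hgb⟩ := (hclass _ h2).resolve_left
      (fun e => hgk (by rwa [inv_mul_eq_one] at e))
    have hmemA : h⁻¹ * k ∈ A := by
      have e3 : h⁻¹ * k = x⁻¹ * ((a ^ 2)⁻¹ * b ^ 2) * x := by
        have e0 : h⁻¹ * k = (g⁻¹ * h)⁻¹ * (g⁻¹ * k) := by group
        rw [e0, hga, hgb]
        group
      rw [hxinv] at e3
      have hmA : (a ^ 2)⁻¹ * b ^ 2 ∈ A := A.mul_mem (A.inv_mem (pow_mem ha 2)) (pow_mem hb 2)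
      rw [e3, hconj _ hmA]
      exact A.inv_mem hmA
    rcases hclass _ h3 with e | ⟨c, hc, hcc⟩
    · exact hhk (by rwa [inv_mul_eq_one] at e)
    · apply hxA
      have : x = (c ^ 2)⁻¹ * (h⁻¹ * k) := by rw [hcc]; group
      rw [this]
      exact A.mul_mem (A.inv_mem (pow_mem hc 2)) hmemA
  -- the independent set {1, x}
  have hindep : IsIndepSet (cayley G (derQ G H)) ↑({1, x} : Finset G) := by
    intro u hu v hv huv
    simp only [Finset.coe_insert, Finset.coe_singleton, Set.mem_insert_iff,
      Set.mem_singleton_iff] at hu hv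
    rintro ⟨hne, hC1, hC2⟩
    rcases hu with rfl | rfl <;> rcases hv with rfl | rfl
    · exact hne rfl
    · exact hxder (by simpa using hC1)
    · exact hxder (by simpa using hC2)
    · exact hne rfl
  have hcard2 : ({1, x} : Finset G).card = 2 := Finset.card_pair (Ne.symm hx1)
  refine ⟨?_, ?_, ?_⟩
  · -- independence number
    have h2S : (2 : ℕ) ∈ {k | ∃ s : Finset G,
        IsIndepSet (cayley G (derQ G H)) ↑s ∧ s.card = k} := ⟨{1, x}, hindep, hcard2⟩
    have hub : ∀ k ∈ {k | ∃ s : Finset G,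
        IsIndepSet (cayley G (derQ G H)) ↑s ∧ s.card = k}, k ≤ 2 := by
      rintro k ⟨s, hs, rfl⟩
      exact hbound s hs
    exact le_antisymm (csSup_le ⟨2, h2S⟩ hub) (le_csSup ⟨2, fun k hk => hub k hk⟩ h2S)
  · -- cardinality
    have horder : orderOf x = 2 := orderOf_eq_prime hx2 hx1
    have hHcard : Nat.card H = 2 := by rw [hHdef, Nat.card_zpowers, horder]
    rw [Subgroup.card_eq_card_quotient_mul_card_subgroup H, hHcard, mul_comm]
  · -- unique derangement
    obtain ⟨a, ha, ha2⟩ := hA2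
    have ha2A : a ^ 2 ∈ A := pow_mem ha 2
    refine ⟨((1 : G) : G ⧸ H), ((a ^ 2 : G) : G ⧸ H), ?_, ?_⟩
    · intro e
      rw [QuotientGroup.eq] at e
      rcases (hmemH _).1 e with h | h
      · exact ha2 (by simpa using h)
      · exact hxA (by rw [← h]; simpa using ha2A)
    · refine ⟨a ^ 2, ⟨hAder _ ha2A ha2, by rw [hsmul, mul_one]⟩, ?_⟩
      rintro g ⟨hgder, hgeq⟩
      rw [hsmul, mul_one, QuotientGroup.eq] at hgeq
      rcases (hmemH _).1 hgeq with h | h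
      · rwa [inv_mul_eq_one] at h
      · exfalso
        apply hsqx a ha
        have h' : g * x = a ^ 2 := by rw [← h]; group
        have hgx : g = a ^ 2 * x := by rw [← h', mul_assoc, hxm, mul_one]
        rwa [← hgx]
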